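/- Picone-type inequality: With L(u,v) = Φ(x,∇u) + (p-1)(u/v)^p Φ(x,∇v) - (u/v)^{p-1}⟨a(x,∇v),∇u⟩ as above, where Φ(x,·) is convex, p-homogeneous and ∇_ξΦ = p·a, one has L(u,v) ≥ 0 for all u ≥ 0, v > 0 differentiable. -/

import Mathlib

open MeasureTheory Real
open scoped RealInnerProductSpace

noncomputable section

variable {N : ℕ}

-- subgradient inequality
lemma subgrad (Φ : EuclideanSpace ℝ (Fin N) → ℝ) (hd : Differentiable ℝ Φ)
    (hc : ConvexOn ℝ Set.univ Φ) (x y : EuclideanSpace ℝ (Fin N)) :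
    Φ x + ⟪gradient Φ x, y - x⟫ ≤ Φ y := by
  set g : ℝ → ℝ := fun s => Φ (x + s • (y - x)) with hg
  have hline : HasDerivAt (fun s : ℝ => x + s • (y - x)) (y - x) 0 := by
    simpa using ((hasDerivAt_id (0:ℝ)).smul_const (y - x)).const_add x
  have hgrad : HasGradientAt Φ (gradient Φ x) x := (hd x).hasGradientAt
  have hF := hgrad.hasFDerivAt
  have hgd : HasDerivAt g (⟪gradient Φ x, y - x⟫) 0 := by
    have hF' : HasFDerivAt Φ ((InnerProductSpace.toDual ℝ (EuclideanSpace ℝ (Fin N)))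
        (gradient Φ x)) (x + (0:ℝ) • (y - x)) := by simpa using hF
    have := hF'.comp_hasDerivAt 0 hline
    simpa [hg, Function.comp_def] using this
  have hconv : ConvexOn ℝ Set.univ g := by
    have := hc.comp_affineMap
      (AffineMap.const ℝ ℝ x + (LinearMap.toSpanSingleton ℝ _ (y - x)).toAffineMap)
    simpa [hg, Function.comp_def] using this
  have := hconv.le_slope_of_hasDerivAt (Set.mem_univ (0:ℝ)) (Set.mem_univ (1:ℝ))
    one_pos hgd
  rw [slope_def_field] at this
  have h0 : g 0 = Φ x := by simp [hg]
  have h1 : g 1 = Φ y := by simp [hg]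
  rw [h0, h1] at this
  have : ⟪gradient Φ x, y - x⟫ ≤ (Φ y - Φ x) / (1 - 0) := this
  linarith [this]

-- Euler's identity
lemma euler (p : ℝ) (hp : 1 < p) (Φ : EuclideanSpace ℝ (Fin N) → ℝ)
    (hd : Differentiable ℝ Φ)
    (hhom : ∀ t : ℝ, 0 < t → ∀ ξ, Φ (t • ξ) = t ^ p * Φ ξ)
    (ξ : EuclideanSpace ℝ (Fin N)) :
    ⟪gradient Φ ξ, ξ⟫ = p * Φ ξ := by
  have hline : HasDerivAt (fun s : ℝ => s • ξ) ξ 1 := by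
    simpa using (hasDerivAt_id (1:ℝ)).smul_const ξ
  have hF : HasFDerivAt Φ ((InnerProductSpace.toDual ℝ (EuclideanSpace ℝ (Fin N)))
      (gradient Φ ξ)) ((1:ℝ) • ξ) := by simpa using (hd _).hasGradientAt.hasFDerivAt
  have h1 : HasDerivAt (fun s : ℝ => Φ (s • ξ)) (⟪gradient Φ ξ, ξ⟫) 1 := by
    simpa [Function.comp_def] using hF.comp_hasDerivAt 1 hline
  have h2 : HasDerivAt (fun s : ℝ => s ^ p * Φ ξ) (p * Φ ξ) 1 := by
    have := (Real.hasDerivAt_rpow_const (x := (1:ℝ)) (p := p)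
      (Or.inl one_ne_zero)).mul_const (Φ ξ)
    simpa using this
  have heq : (fun s : ℝ => Φ (s • ξ)) =ᶠ[nhds 1] fun s : ℝ => s ^ p * Φ ξ := by
    filter_upwards [eventually_gt_nhds one_pos] with t ht
    exact hhom t ht ξ
  have h1' : HasDerivAt (fun s : ℝ => s ^ p * Φ ξ) (⟪gradient Φ ξ, ξ⟫) 1 :=
    h1.congr_of_eventuallyEq heq.symm
  exact h1'.unique h2

-- nonnegativity
lemma phi_nonneg (p : ℝ) (hp : 1 < p) (Φ : EuclideanSpace ℝ (Fin N) → ℝ)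
    (hc : ConvexOn ℝ Set.univ Φ)
    (hhom : ∀ t : ℝ, 0 < t → ∀ ξ, Φ (t • ξ) = t ^ p * Φ ξ)
    (ξ : EuclideanSpace ℝ (Fin N)) : 0 ≤ Φ ξ := by
  have h0 : Φ 0 = 0 := by
    have h := hhom 2 (by norm_num) 0
    rw [smul_zero] at h
    have h2 : (1:ℝ) < (2:ℝ) ^ p :=
      (Real.one_lt_rpow_iff_of_pos two_pos).mpr (Or.inl ⟨one_lt_two, by linarith⟩)
    nlinarith
  have hconv := hc.2 (Set.mem_univ ξ) (Set.mem_univ (0:EuclideanSpace ℝ (Fin N)))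
    (by norm_num : (0:ℝ) ≤ (1/2:ℝ)) (by norm_num : (0:ℝ) ≤ (1/2:ℝ)) (by norm_num)
  rw [smul_zero, add_zero, h0] at hconv
  have hh := hhom (1/2) (by norm_num) ξ
  rw [hh] at hconv
  simp only [smul_eq_mul] at hconv
  have hlt : ((1:ℝ)/2) ^ p < (1/2 : ℝ) := by
    calc ((1:ℝ)/2) ^ p < (1/2:ℝ) ^ (1:ℝ) :=
      Real.rpow_lt_rpow_of_exponent_gt (by norm_num) (by norm_num) hp
    _ = 1/2 := Real.rpow_one _
  nlinarith

/-- Picone-type inequality: `L(u,v) ≥ 0` for `u ≥ 0`, `v > 0` differentiable,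
where `Φ` is convex, `p`-homogeneous and `∇_ξΦ = p a`. -/
theorem picone_inequality
    {N : ℕ} (p : ℝ) (hp : 1 < p)
    (Φ : EuclideanSpace ℝ (Fin N) → ℝ)
    (a : EuclideanSpace ℝ (Fin N) → EuclideanSpace ℝ (Fin N))
    (hΦdiff : Differentiable ℝ Φ)
    (hΦconv : ConvexOn ℝ Set.univ Φ)
    (hΦhom : ∀ t : ℝ, 0 < t → ∀ ξ, Φ (t • ξ) = t ^ p * Φ ξ)
    (ha : ∀ ξ, gradient Φ ξ = p • a ξ)
    (u v : EuclideanSpace ℝ (Fin N) → ℝ)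
    (hu : ∀ x, 0 ≤ u x) (hv : ∀ x, 0 < v x)
    (x₀ : EuclideanSpace ℝ (Fin N))
    (hud : DifferentiableAt ℝ u x₀) (hvd : DifferentiableAt ℝ v x₀) :
    0 ≤ Φ (gradient u x₀) + (p - 1) * (u x₀ / v x₀) ^ p * Φ (gradient v x₀)
        - (u x₀ / v x₀) ^ (p - 1) * ⟪a (gradient v x₀), gradient u x₀⟫ := by
  have hp0 : 0 < p := by linarith
  set gu := gradient u x₀ with hgu
  set gv := gradient v x₀ with hgv
  set t := u x₀ / v x₀ with htdef
  set X := (⟪a gv, gu⟫ : ℝ) with hX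
  have ht0 : 0 ≤ t := div_nonneg (hu x₀) (hv x₀).le
  have hΦu : 0 ≤ Φ gu := phi_nonneg p hp Φ hΦconv hΦhom gu
  have hΦv : 0 ≤ Φ gv := phi_nonneg p hp Φ hΦconv hΦhom gv
  -- Euler at gv
  have heuler : (⟪a gv, gv⟫ : ℝ) = Φ gv := by
    have h := euler p hp Φ hΦdiff hΦhom gv
    rw [ha gv, real_inner_smul_left] at h
    exact mul_left_cancel₀ (ne_of_gt hp0) h
  rcases eq_or_lt_of_le ht0 with h | ht
  · rw [← h, Real.zero_rpow (ne_of_gt hp0), Real.zero_rpow (sub_ne_zero.mpr (ne_of_gt hp))]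
    simpa using hΦu
  · -- subgradient inequality at gv against t⁻¹ • gu
    have hti : 0 < t⁻¹ := inv_pos.mpr ht
    have key := subgrad Φ hΦdiff hΦconv gv (t⁻¹ • gu)
    rw [ha gv, inner_sub_right, real_inner_smul_left, real_inner_smul_left,
      real_inner_smul_right, heuler, hΦhom t⁻¹ hti gu] at key
    -- key : Φ gv + (p * (t⁻¹ * X) - p * Φ gv) ≤ (t⁻¹) ^ p * Φ gu
    have hApos : (0:ℝ) < t ^ p := Real.rpow_pos_of_pos ht p
    have hBpos : (0:ℝ) < t ^ (p - 1) := Real.rpow_pos_of_pos ht (p - 1)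
    have hA : t ^ p * (t⁻¹) ^ p = 1 := by
      rw [← Real.mul_rpow ht0 hti.le, mul_inv_cancel₀ (ne_of_gt ht), Real.one_rpow]
    have hB : t ^ p * t⁻¹ = t ^ (p - 1) := by
      rw [Real.rpow_sub_one (ne_of_gt ht)]
      field_simp
    have key3 : t ^ p * (Φ gv + (p * (t⁻¹ * X) - p * Φ gv)) ≤ Φ gu := by
      calc t ^ p * (Φ gv + (p * (t⁻¹ * X) - p * Φ gv))
          ≤ t ^ p * ((t⁻¹) ^ p * Φ gu) := by
            apply mul_le_mul_of_nonneg_left _ hApos.le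
            linarith [key]
        _ = t ^ p * (t⁻¹) ^ p * Φ gu := by ring
        _ = Φ gu := by rw [hA, one_mul]
    have key4 : t ^ p * Φ gv + p * (t ^ (p - 1)) * X - p * (t ^ p) * Φ gv ≤ Φ gu := by
      have hexp : t ^ p * (Φ gv + (p * (t⁻¹ * X) - p * Φ gv))
          = t ^ p * Φ gv + p * (t ^ p * t⁻¹) * X - p * (t ^ p) * Φ gv := by ring
      rw [hexp, hB] at key3
      exact key3
    rcases le_or_gt X 0 with hXle | hXpos
    · nlinarith [mul_nonneg hApos.le hΦv, mul_nonpos_of_nonneg_of_nonpos hBpos.le hXle]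
    · nlinarith [key4, mul_nonneg (mul_nonneg (by linarith : (0:ℝ) ≤ p - 1) hBpos.le) hXpos.le]
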